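/- For any set 𝒲 of probability measures on a measurable space (Y,𝒜): (i) α ↦ (α−1)·C_α(𝒲) is convex on (1,∞); (ii) if C_η(𝒲) < ∞ for some η ∈ (0,1), then C_α(𝒲) < ∞ for every α ∈ (0,1). -/

import Mathlib

open MeasureTheory ENNReal Filter Topology

namespace RenyiPaper

open scoped Classical

variable {Y : Type*} [MeasurableSpace Y]

/-- The Kullback–Leibler divergence, i.e. the order-`1` Rényi divergence, with
values in `EReal`; it is `⊤` unless `W ≪ Q` and the log-likelihood ratio is integrable. -/
noncomputable def klDiv (W Q : Measure Y) : EReal :=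
  if W ≪ Q ∧ Integrable (llr W Q) W then ((∫ y, llr W Q y ∂W : ℝ) : EReal) else ⊤

/-- The integral `∫ (dW/dν)^α (dQ/dν)^{1-α} dν` (with `ν = W + Q`) appearing in the
definition of the order-`α` Rényi divergence for `α ∈ (0,1) ∪ (1,∞)`. -/
noncomputable def renyiIntegral (α : ℝ) (W Q : Measure Y) : ℝ≥0∞ :=
  ∫⁻ y, (W.rnDeriv (W + Q) y) ^ α * (Q.rnDeriv (W + Q) y) ^ (1 - α) ∂(W + Q)

/-- The order-`α` Rényi divergence `D_α(W‖Q)` for `α ∈ (0,∞]`. -/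
noncomputable def renyiDiv (α : ℝ≥0∞) (W Q : Measure Y) : EReal :=
  if α = ∞ then
    ENNReal.log (essSup (fun y => W.rnDeriv (W + Q) y / Q.rnDeriv (W + Q) y) (W + Q))
  else if α = 1 then klDiv W Q
  else (((α.toReal - 1)⁻¹ : ℝ) : EReal) * ENNReal.log (renyiIntegral α.toReal W Q)

/-- `P` is a finitely supported probability mass function on `𝒲`. -/
def IsFinPrior (𝒲 : Set (Measure Y)) (P : Measure Y → ℝ≥0∞) : Prop :=
  (Function.support P).Finite ∧ Function.support P ⊆ 𝒲 ∧ ∑' W, P W = 1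

/-- A reference measure dominating every measure in the support of the prior `P`. -/
noncomputable def refMeasure (P : Measure Y → ℝ≥0∞) : Measure Y :=
  Measure.sum (fun W : Function.support P => (W : Measure Y))

/-- The order-`α` mean measure `μ_{α,P}`. -/
noncomputable def meanMeasure (α : ℝ≥0∞) (P : Measure Y → ℝ≥0∞) : Measure Y :=
  (refMeasure P).withDensity fun y =>
    if α = ∞ then ⨆ W : Function.support P, (W : Measure Y).rnDeriv (refMeasure P) y
    else (∑' W : Function.support P,
        P W * ((W : Measure Y).rnDeriv (refMeasure P) y) ^ α.toReal) ^ α.toReal⁻¹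

/-- The order-`α` Rényi mean `q_{α,P} = μ_{α,P} / ‖μ_{α,P}‖`. -/
noncomputable def renyiMean (α : ℝ≥0∞) (P : Measure Y → ℝ≥0∞) : Measure Y :=
  (meanMeasure α P Set.univ)⁻¹ • meanMeasure α P

/-- The order-`α` Rényi information `I_α(P;𝒲)` of the prior `P`. -/
noncomputable def renyiInfo (α : ℝ≥0∞) (P : Measure Y → ℝ≥0∞) : EReal :=
  if α = ∞ then ENNReal.log (meanMeasure ∞ P Set.univ)
  else if α = 1 then
    ∑' W : Function.support P,
      ((P (W : Measure Y)).toReal : EReal) * klDiv (W : Measure Y) (meanMeasure 1 P)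
  else ((α.toReal / (α.toReal - 1) : ℝ) : EReal) * ENNReal.log (meanMeasure α P Set.univ)

/-- The order-`α` Rényi capacity `C_α(𝒲)`. -/
noncomputable def renyiCapacity (α : ℝ≥0∞) (𝒲 : Set (Measure Y)) : EReal :=
  ⨆ P ∈ {P : Measure Y → ℝ≥0∞ | IsFinPrior 𝒲 P}, renyiInfo α P

/-- The order-`α` Rényi radius of `𝒲` relative to `Q`, `S_α(𝒲‖Q)`. -/
noncomputable def relRadius (α : ℝ≥0∞) (𝒲 : Set (Measure Y)) (Q : Measure Y) : EReal :=
  ⨆ W ∈ 𝒲, renyiDiv α W Q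

/-- The prior `P` viewed as a (discrete) measure on the space of measures. -/
noncomputable def priorMeasure (P : Measure Y → ℝ≥0∞) : Measure (Measure Y) :=
  Measure.sum (fun W : Function.support P => P (W : Measure Y) • Measure.dirac (W : Measure Y))

/-- The joint measure `P ⊛ 𝒲`, whose first marginal is `P` and whose conditional
distribution given `W` is `W` itself. -/
noncomputable def jointMeasure (P : Measure Y → ℝ≥0∞) : Measure (Measure Y × Y) :=
  Measure.sum (fun W : Function.support P =>
    P (W : Measure Y) • ((Measure.dirac (W : Measure Y)).prod (W : Measure Y)))

/-- The product measure `P ⊗ Q`. -/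
noncomputable def prodMeasure (P : Measure Y → ℝ≥0∞) (Q : Measure Y) : Measure (Measure Y × Y) :=
  (priorMeasure P).prod Q

/-- The total variation distance `‖μ - ν‖` between two (finite) measures. -/
noncomputable def tvDist (μ ν : Measure Y) : ℝ≥0∞ :=
  ∫⁻ y, (μ.rnDeriv (μ + ν) y - ν.rnDeriv (μ + ν) y)
      + (ν.rnDeriv (μ + ν) y - μ.rnDeriv (μ + ν) y) ∂(μ + ν)

/-- The total variation distance `‖P₁ - P₂‖ = Σ_W |P₁(W) - P₂(W)|` between two priors. -/
noncomputable def priorDist (P₁ P₂ : Measure Y → ℝ≥0∞) : ℝ≥0∞ :=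
  ∑' W, ((P₁ W - P₂ W) + (P₂ W - P₁ W))

/-- `Q` is an order-`α` Rényi center of `𝒲`: a probability measure whose relative
Rényi radius equals the Rényi capacity. -/
def IsRenyiCenter (α : ℝ≥0∞) (𝒲 : Set (Measure Y)) (Q : Measure Y) : Prop :=
  IsProbabilityMeasure Q ∧ relRadius α 𝒲 Q = renyiCapacity α 𝒲



/-! ### Auxiliary machinery -/

section Aux

variable {Y : Type*} [MeasurableSpace Y]

/-- The density of the order-`a` mean measure (real exponent version). -/
noncomputable def dens (P : Measure Y → ℝ≥0∞) (a : ℝ) (y : Y) : ℝ≥0∞ :=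
  (∑' W : Function.support P,
      P W * ((W : Measure Y).rnDeriv (refMeasure P) y) ^ a) ^ a⁻¹

/-- The mass of the order-`a` mean measure (real exponent version). -/
noncomputable def mm (P : Measure Y → ℝ≥0∞) (a : ℝ) : ℝ≥0∞ :=
  ∫⁻ y, dens P a y ∂(refMeasure P)

lemma meanMeasure_univ (P : Measure Y → ℝ≥0∞) {α : ℝ≥0∞} (hα : α ≠ ∞) :
    meanMeasure α P Set.univ = mm P α.toReal := by
  rw [meanMeasure, withDensity_apply _ MeasurableSet.univ, Measure.restrict_univ]
  simp only [if_neg hα]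
  rfl

lemma measurable_dens (P : Measure Y → ℝ≥0∞) (hfin : (Function.support P).Finite) (a : ℝ) :
    Measurable (dens P a) := by
  haveI := hfin.to_subtype
  apply (ENNReal.continuous_rpow_const.measurable).comp
  exact Measurable.ennreal_tsum fun W => measurable_const.mul
    ((ENNReal.continuous_rpow_const.measurable).comp (Measure.measurable_rnDeriv _ _))

lemma finite_refMeasure (P : Measure Y → ℝ≥0∞) (hfin : (Function.support P).Finite)
    (hprob : ∀ W ∈ Function.support P, IsProbabilityMeasure W) :
    IsFiniteMeasure (refMeasure P) := by
  haveI := hfin.fintype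
  constructor
  rw [refMeasure, Measure.sum_apply _ MeasurableSet.univ]
  have h1 : ∀ W : Function.support P, (W : Measure Y) Set.univ = 1 := fun W =>
    (hprob W W.2).measure_univ
  simp only [h1]
  rw [tsum_fintype]
  exact ENNReal.sum_lt_top.mpr fun _ _ => ENNReal.one_lt_top

lemma tsum_support_eq (P : Measure Y → ℝ≥0∞) (hsum : ∑' W, P W = 1) :
    ∑' W : Function.support P, P W = 1 := by
  rw [tsum_subtype_eq_of_support_subset subset_rfl]
  exact hsum

lemma sum_support_eq (P : Measure Y → ℝ≥0∞) (hfin : (Function.support P).Finite)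
    (hsum : ∑' W, P W = 1) [Fintype (Function.support P)] :
    ∑ W : Function.support P, P W = 1 := by
  rw [← tsum_fintype (L := SummationFilter.unconditional _)]
  exact tsum_support_eq P hsum

lemma mm_one (P : Measure Y → ℝ≥0∞) (hfin : (Function.support P).Finite)
    (hsum : ∑' W, P W = 1)
    (hprob : ∀ W ∈ Function.support P, IsProbabilityMeasure W) :
    mm P 1 = 1 := by
  haveI := hfin.to_subtype
  haveI := finite_refMeasure P hfin hprob
  have h1 : ∀ y, dens P 1 y
      = ∑' W : Function.support P, P W * (W : Measure Y).rnDeriv (refMeasure P) y := by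
    intro y
    rw [dens]
    simp [ENNReal.rpow_one]
  rw [mm]
  simp only [h1]
  rw [lintegral_tsum (f := fun (W : Function.support P) y => P W * (W : Measure Y).rnDeriv (refMeasure P) y) fun W =>
    (measurable_const.mul (Measure.measurable_rnDeriv _ _)).aemeasurable]
  have h2 : ∀ W : Function.support P,
      ∫⁻ y, P W * (W : Measure Y).rnDeriv (refMeasure P) y ∂(refMeasure P) = P W := by
    intro W
    rw [lintegral_const_mul _ (Measure.measurable_rnDeriv _ _)]
    haveI := hprob W W.2
    have hle : (W : Measure Y) ≤ refMeasure P :=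
      Measure.le_sum (fun W : Function.support P => (W : Measure Y)) W
    rw [Measure.lintegral_rnDeriv (Measure.absolutelyContinuous_of_le hle)]
    simp
  simp only [h2]
  exact tsum_support_eq P hsum

lemma dens_mono (P : Measure Y → ℝ≥0∞) (hfin : (Function.support P).Finite)
    (hsum : ∑' W, P W = 1) {α β : ℝ} (hα : 0 < α) (hαβ : α ≤ β) (y : Y) :
    dens P α y ≤ dens P β y := by
  haveI := hfin.fintype
  have hβ : 0 < β := lt_of_lt_of_le hα hαβ
  rw [dens, dens, tsum_fintype, tsum_fintype]
  have key := ENNReal.rpow_arith_mean_le_arith_mean_rpow Finset.univ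
    (fun W : Function.support P => P W)
    (fun W : Function.support P => ((W : Measure Y).rnDeriv (refMeasure P) y) ^ α)
    (by simpa using sum_support_eq P hfin hsum) (p := β / α)
    ((one_le_div hα).mpr hαβ)
  have h2 : ∀ W : Function.support P,
      (((W : Measure Y).rnDeriv (refMeasure P) y) ^ α) ^ (β / α)
        = ((W : Measure Y).rnDeriv (refMeasure P) y) ^ β := by
    intro W
    rw [← ENNReal.rpow_mul]
    congr 1
    field_simp
  simp only [h2] at key
  calc (∑ W : Function.support P,
        P W * ((W : Measure Y).rnDeriv (refMeasure P) y) ^ α) ^ α⁻¹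
      = ((∑ W : Function.support P,
          P W * ((W : Measure Y).rnDeriv (refMeasure P) y) ^ α) ^ (β / α)) ^ β⁻¹ := by
        rw [← ENNReal.rpow_mul]
        congr 1
        field_simp
    _ ≤ (∑ W : Function.support P,
          P W * ((W : Measure Y).rnDeriv (refMeasure P) y) ^ β) ^ β⁻¹ :=
        ENNReal.rpow_le_rpow key (by positivity)

lemma mm_mono (P : Measure Y → ℝ≥0∞) (hfin : (Function.support P).Finite)
    (hsum : ∑' W, P W = 1) {α β : ℝ} (hα : 0 < α) (hαβ : α ≤ β) :
    mm P α ≤ mm P β :=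
  lintegral_mono fun y => dens_mono P hfin hsum hα hαβ y

lemma mm_le_one (P : Measure Y → ℝ≥0∞) (hfin : (Function.support P).Finite)
    (hsum : ∑' W, P W = 1)
    (hprob : ∀ W ∈ Function.support P, IsProbabilityMeasure W)
    {α : ℝ} (hα : 0 < α) (hα1 : α ≤ 1) : mm P α ≤ 1 :=
  (mm_mono P hfin hsum hα hα1).trans_eq (mm_one P hfin hsum hprob)

lemma one_le_mm (P : Measure Y → ℝ≥0∞) (hfin : (Function.support P).Finite)
    (hsum : ∑' W, P W = 1)
    (hprob : ∀ W ∈ Function.support P, IsProbabilityMeasure W)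
    {α : ℝ} (hα : 1 ≤ α) : 1 ≤ mm P α :=
  (mm_one P hfin hsum hprob).symm.trans_le (mm_mono P hfin hsum one_pos hα)

/-- The core Hölder inequality for mean-measure masses. -/
lemma mm_holder (P : Measure Y → ℝ≥0∞) (hfin : (Function.support P).Finite)
    (hsum : ∑' W, P W = 1) {p q t : ℝ} (hp : 0 < p) (hq : 0 < q)
    (ht : 0 < t) (ht1 : t < 1) :
    mm P (t * p + (1 - t) * q)
      ≤ (mm P p) ^ (t * p / (t * p + (1 - t) * q))
        * (mm P q) ^ ((1 - t) * q / (t * p + (1 - t) * q)) := by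
  haveI := hfin.fintype
  set c := t * p + (1 - t) * q with hc
  have ht1' : 0 < 1 - t := by linarith
  have hcpos : 0 < c := add_pos (mul_pos ht hp) (mul_pos ht1' hq)
  set θ := t * p / c with hθ
  have hθ0 : 0 < θ := div_pos (mul_pos ht hp) hcpos
  have hθ1 : θ < 1 := by
    rw [hθ, div_lt_one hcpos, hc]
    nlinarith
  have h1θ : 1 - θ = (1 - t) * q / c := by
    rw [hθ]
    field_simp
    ring
  -- pointwise inequality
  have hpoint : ∀ y, dens P c y ≤ (dens P p y) ^ θ * (dens P q y) ^ (1 - θ) := by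
    intro y
    set w : Function.support P → ℝ≥0∞ :=
      fun W => (W : Measure Y).rnDeriv (refMeasure P) y with hw
    have hconj : (1 / t).HolderConjugate (1 / (1 - t)) := by
      constructor
      · rw [one_div, one_div, inv_inv, inv_inv, inv_one]; ring
      · exact one_div_pos.mpr ht
      · exact one_div_pos.mpr ht1'
    have key := ENNReal.inner_le_Lp_mul_Lq Finset.univ
      (fun W : Function.support P => (P W * w W ^ p) ^ t)
      (fun W : Function.support P => (P W * w W ^ q) ^ (1 - t)) hconj
    have e1 : ∀ W : Function.support P,
        ((P W * w W ^ p) ^ t) ^ (1 / t) = P W * w W ^ p := by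
      intro W
      rw [← ENNReal.rpow_mul, mul_one_div_cancel ht.ne', ENNReal.rpow_one]
    have e2 : ∀ W : Function.support P,
        ((P W * w W ^ q) ^ (1 - t)) ^ (1 / (1 - t)) = P W * w W ^ q := by
      intro W
      rw [← ENNReal.rpow_mul, mul_one_div_cancel ht1'.ne', ENNReal.rpow_one]
    have e3 : ∀ W : Function.support P,
        (P W * w W ^ p) ^ t * (P W * w W ^ q) ^ (1 - t) = P W * w W ^ c := by
      intro W
      rw [ENNReal.mul_rpow_of_nonneg _ _ ht.le, ENNReal.mul_rpow_of_nonneg _ _ ht1'.le,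
        ← ENNReal.rpow_mul, ← ENNReal.rpow_mul,
        mul_mul_mul_comm, ← ENNReal.rpow_add_of_nonneg _ _ ht.le ht1'.le,
        ← ENNReal.rpow_add_of_nonneg _ _ (by positivity) (by positivity)]
      have ht' : t + (1 - t) = 1 := by ring
      rw [ht', ENNReal.rpow_one]
      congr 1
      rw [hc]
      ring
    simp only [e1, e2, e3, one_div_one_div] at key
    -- key : ∑ P W * w W ^ c ≤ (∑ P W * w W ^ p) ^ t * (∑ P W * w W ^ q) ^ (1 - t)
    have step : dens P c y
        ≤ ((∑ W : Function.support P, P W * w W ^ p) ^ t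
          * (∑ W : Function.support P, P W * w W ^ q) ^ (1 - t)) ^ c⁻¹ := by
      rw [dens, tsum_fintype]
      exact ENNReal.rpow_le_rpow key (by positivity)
    refine step.trans (le_of_eq ?_)
    rw [ENNReal.mul_rpow_of_nonneg _ _ (by positivity), dens, dens, tsum_fintype, tsum_fintype,
      ← ENNReal.rpow_mul, ← ENNReal.rpow_mul, ← ENNReal.rpow_mul, ← ENNReal.rpow_mul]
    congr 2
    · rw [hθ]; field_simp; try ring
    · rw [h1θ]; field_simp; try ring
  -- integral Hölder
  have hconj2 : (1 / θ).HolderConjugate (1 / (1 - θ)) := by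
    constructor
    · rw [one_div, one_div, inv_inv, inv_inv, inv_one]; ring
    · exact one_div_pos.mpr hθ0
    · exact one_div_pos.mpr (by linarith)
  have hf : AEMeasurable (fun y => (dens P p y) ^ θ) (refMeasure P) :=
    ((ENNReal.continuous_rpow_const.measurable).comp (measurable_dens P hfin p)).aemeasurable
  have hg : AEMeasurable (fun y => (dens P q y) ^ (1 - θ)) (refMeasure P) :=
    ((ENNReal.continuous_rpow_const.measurable).comp (measurable_dens P hfin q)).aemeasurable
  have key2 := ENNReal.lintegral_mul_le_Lp_mul_Lq (refMeasure P) hconj2 hf hg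
  rw [mm]
  calc ∫⁻ y, dens P c y ∂(refMeasure P)
      ≤ ∫⁻ y, (dens P p y) ^ θ * (dens P q y) ^ (1 - θ) ∂(refMeasure P) :=
        lintegral_mono hpoint
    _ ≤ (∫⁻ y, ((dens P p y) ^ θ) ^ (1 / θ) ∂(refMeasure P)) ^ (1 / (1 / θ))
        * (∫⁻ y, ((dens P q y) ^ (1 - θ)) ^ (1 / (1 - θ)) ∂(refMeasure P))
          ^ (1 / (1 / (1 - θ))) := key2
    _ = (mm P p) ^ θ * (mm P q) ^ (1 - θ) := by
        rw [one_div_one_div, one_div_one_div]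
        congr 1
        · congr 1
          apply lintegral_congr
          intro y
          rw [← ENNReal.rpow_mul, mul_one_div_cancel hθ0.ne', ENNReal.rpow_one]
        · congr 1
          apply lintegral_congr
          intro y
          rw [← ENNReal.rpow_mul, mul_one_div_cancel (by linarith : (1:ℝ) - θ ≠ 0),
            ENNReal.rpow_one]
    _ = (mm P p) ^ (t * p / c) * (mm P q) ^ ((1 - t) * q / c) := by rw [← hθ, ← h1θ]

/-! ### EReal helpers -/

lemma ecoe_mul_assoc (r s : ℝ) (x : EReal) :
    (r : EReal) * ((s : EReal) * x) = ((r * s : ℝ) : EReal) * x := by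
  rw [EReal.coe_mul, mul_assoc]

lemma ecoe_mul_iSup {ι : Sort*} (f : ι → EReal) {r : ℝ} (hr : 0 < r) :
    (r : EReal) * (⨆ i, f i) = ⨆ i, (r : EReal) * f i := by
  apply le_antisymm
  · have h1 : (⨆ i, f i) ≤ (r⁻¹ : ℝ) * ⨆ i, (r : EReal) * f i := by
      apply iSup_le
      intro i
      have h2 : f i = (r⁻¹ : ℝ) * ((r : EReal) * f i) := by
        rw [ecoe_mul_assoc, inv_mul_cancel₀ hr.ne', EReal.coe_one, one_mul]
      rw [h2]
      exact mul_le_mul_of_nonneg_left (le_iSup (fun i => (r : EReal) * f i) i)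
        (EReal.coe_nonneg.mpr (inv_nonneg.mpr hr.le))
    calc (r : EReal) * (⨆ i, f i)
        ≤ (r : EReal) * ((r⁻¹ : ℝ) * ⨆ i, (r : EReal) * f i) :=
          mul_le_mul_of_nonneg_left h1 (EReal.coe_nonneg.mpr hr.le)
      _ = ⨆ i, (r : EReal) * f i := by
          rw [ecoe_mul_assoc, mul_inv_cancel₀ hr.ne', EReal.coe_one, one_mul]
  · exact iSup_le fun i => mul_le_mul_of_nonneg_left (le_iSup f i)
      (EReal.coe_nonneg.mpr hr.le)

lemma ecoe_mul_lt_top {r : ℝ} (hr : 0 < r) {x : EReal} (hx : x < ⊤) :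
    (r : EReal) * x < ⊤ := by
  induction x using EReal.rec with
  | bot => rw [EReal.coe_mul_bot_of_pos hr]; exact bot_lt_top
  | coe x => rw [← EReal.coe_mul]; exact EReal.coe_lt_top _
  | top => exact absurd hx (lt_irrefl _)

lemma renyiCapacity_eq (α : ℝ≥0∞) (𝒲 : Set (Measure Y)) :
    renyiCapacity α 𝒲 = ⨆ P : {P : Measure Y → ℝ≥0∞ // IsFinPrior 𝒲 P}, renyiInfo α P.1 := by
  rw [renyiCapacity]
  exact (iSup_subtype'' {P : Measure Y → ℝ≥0∞ | IsFinPrior 𝒲 P} _).symm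

lemma renyiInfo_eq (P : Measure Y → ℝ≥0∞) {α : ℝ≥0∞} (hα : α ≠ ∞) (hα1 : α ≠ 1) :
    renyiInfo α P
      = ((α.toReal / (α.toReal - 1) : ℝ) : EReal) * ENNReal.log (mm P α.toReal) := by
  rw [renyiInfo, if_neg hα, if_neg hα1, meanMeasure_univ P hα]

end Aux

/-- `(α−1)·C_α(𝒲)` is convex in `α` on `(1,∞)`, and finiteness of `C_η(𝒲)` for a single
`η ∈ (0,1)` implies finiteness of `C_α(𝒲)` for every `α ∈ (0,1)`. -/
theorem renyi_capacity_convexity_and_finiteness {Y : Type*} [MeasurableSpace Y]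
    (𝒲 : Set (Measure Y)) (h𝒲 : ∀ W ∈ 𝒲, IsProbabilityMeasure W) :
    (∀ a b : ℝ, 1 < a → 1 < b → ∀ t : ℝ, 0 ≤ t → t ≤ 1 →
      ((t * a + (1 - t) * b - 1 : ℝ) : EReal)
          * renyiCapacity (ENNReal.ofReal (t * a + (1 - t) * b)) 𝒲
        ≤ ((t : ℝ) : EReal) * (((a - 1 : ℝ) : EReal) * renyiCapacity (ENNReal.ofReal a) 𝒲)
          + (((1 - t : ℝ)) : EReal)
            * (((b - 1 : ℝ) : EReal) * renyiCapacity (ENNReal.ofReal b) 𝒲)) ∧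
    (∀ η : ℝ≥0∞, 0 < η → η < 1 → renyiCapacity η 𝒲 < ⊤ →
      ∀ α : ℝ≥0∞, 0 < α → α < 1 → renyiCapacity α 𝒲 < ⊤) := by
  constructor
  · -- Part (i): convexity of `(α-1) C_α` on `(1,∞)`.
    intro a b ha hb t ht0 ht1
    rcases eq_or_lt_of_le ht0 with rfl | ht0'
    · norm_num
    rcases eq_or_lt_of_le ht1 with rfl | ht1'
    · norm_num
    set c := t * a + (1 - t) * b with hcdef
    have ha0 : 0 < a := by linarith
    have hb0 : 0 < b := by linarith
    have hc1 : 1 < c := by nlinarith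
    have hc0 : 0 < c := by linarith
    have key : ∀ P : {P : Measure Y → ℝ≥0∞ // IsFinPrior 𝒲 P},
        ((c - 1 : ℝ) : EReal) * renyiInfo (ENNReal.ofReal c) P.1
          ≤ ((t : ℝ) : EReal)
              * (((a - 1 : ℝ) : EReal) * renyiCapacity (ENNReal.ofReal a) 𝒲)
            + (((1 - t : ℝ)) : EReal)
              * (((b - 1 : ℝ) : EReal) * renyiCapacity (ENNReal.ofReal b) 𝒲) := by
      rintro ⟨P, hfin, hsub, hsum⟩
      have hprob : ∀ W ∈ Function.support P, IsProbabilityMeasure W :=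
        fun W hW => h𝒲 W (hsub hW)
      have hinfo : ∀ α : ℝ, 1 < α →
          ((α - 1 : ℝ) : EReal) * renyiInfo (ENNReal.ofReal α) P
            = (α : EReal) * ENNReal.log (mm P α) := by
        intro α hα
        have hne : α - 1 ≠ 0 := by linarith
        have hαe : (α - 1) * (α / (α - 1)) = α := by
          rw [mul_comm]
          exact div_mul_cancel₀ α hne
        rw [renyiInfo_eq P ENNReal.ofReal_ne_top
            (by rw [Ne, ENNReal.ofReal_eq_one]; linarith),
          ENNReal.toReal_ofReal (by linarith), ecoe_mul_assoc, hαe]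
      have hle : ∀ αe : ℝ≥0∞, renyiInfo αe P ≤ renyiCapacity αe 𝒲 := by
        intro αe
        rw [renyiCapacity_eq]
        exact le_iSup (fun Q : {P : Measure Y → ℝ≥0∞ // IsFinPrior 𝒲 P} =>
          renyiInfo αe Q.1) ⟨P, hfin, hsub, hsum⟩
      have hhol := mm_holder P hfin hsum ha0 hb0 ht0' ht1'
      have hlog : ENNReal.log (mm P c)
          ≤ ((t * a / c : ℝ) : EReal) * ENNReal.log (mm P a)
            + (((1 - t) * b / c : ℝ) : EReal) * ENNReal.log (mm P b) := by
        refine le_trans (ENNReal.log_monotone hhol) (le_of_eq ?_)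
        rw [ENNReal.log_mul_add, ENNReal.log_rpow, ENNReal.log_rpow]
      have hla : (0 : EReal) ≤ ENNReal.log (mm P a) :=
        ENNReal.zero_le_log_iff.mpr (one_le_mm P hfin hsum hprob ha.le)
      have hlb : (0 : EReal) ≤ ENNReal.log (mm P b) :=
        ENNReal.zero_le_log_iff.mpr (one_le_mm P hfin hsum hprob hb.le)
      have hca : (0 : ℝ) ≤ t * a / c := by positivity
      have hcb : (0 : ℝ) ≤ (1 - t) * b / c := by
        have h1t : (0:ℝ) ≤ 1 - t := by linarith
        positivity
      have e5 : c * (t * a / c) = t * a := by field_simp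
      have e6 : c * ((1 - t) * b / c) = (1 - t) * b := by field_simp
      calc ((c - 1 : ℝ) : EReal) * renyiInfo (ENNReal.ofReal c) P
          = (c : EReal) * ENNReal.log (mm P c) := hinfo c hc1
        _ ≤ (c : EReal) * (((t * a / c : ℝ) : EReal) * ENNReal.log (mm P a)
              + (((1 - t) * b / c : ℝ) : EReal) * ENNReal.log (mm P b)) :=
            mul_le_mul_of_nonneg_left hlog (EReal.coe_nonneg.mpr hc0.le)
        _ = ((t : ℝ) : EReal) * (((a : ℝ) : EReal) * ENNReal.log (mm P a))
              + (((1 - t) : ℝ) : EReal) * (((b : ℝ) : EReal) * ENNReal.log (mm P b)) := by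
            rw [EReal.left_distrib_of_nonneg
                (mul_nonneg (EReal.coe_nonneg.mpr hca) hla)
                (mul_nonneg (EReal.coe_nonneg.mpr hcb) hlb),
              ecoe_mul_assoc, ecoe_mul_assoc, e5, e6, ← ecoe_mul_assoc, ← ecoe_mul_assoc]
        _ = ((t : ℝ) : EReal) * (((a - 1 : ℝ) : EReal) * renyiInfo (ENNReal.ofReal a) P)
              + (((1 - t) : ℝ) : EReal)
                * (((b - 1 : ℝ) : EReal) * renyiInfo (ENNReal.ofReal b) P) := by
            rw [hinfo a ha, hinfo b hb]
        _ ≤ _ := by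
            refine add_le_add ?_ ?_
            · exact mul_le_mul_of_nonneg_left
                (mul_le_mul_of_nonneg_left (hle _) (EReal.coe_nonneg.mpr (by linarith)))
                (EReal.coe_nonneg.mpr ht0'.le)
            · exact mul_le_mul_of_nonneg_left
                (mul_le_mul_of_nonneg_left (hle _) (EReal.coe_nonneg.mpr (by linarith)))
                (EReal.coe_nonneg.mpr (by linarith))
    rw [renyiCapacity_eq, ecoe_mul_iSup _ (by linarith : (0:ℝ) < c - 1)]
    exact iSup_le key
  · -- Part (ii): finiteness propagates on `(0,1)`.
    intro η hη0 hη1 hCη α hα0 hα1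
    have hηtop : η ≠ ∞ := ne_top_of_lt (hη1.trans ENNReal.one_lt_top)
    have hαtop : α ≠ ∞ := ne_top_of_lt (hα1.trans ENNReal.one_lt_top)
    set e := η.toReal with he
    set aR := α.toReal with haR
    have he0 : 0 < e := ENNReal.toReal_pos hη0.ne' hηtop
    have he1 : e < 1 := by
      have := (ENNReal.toReal_lt_toReal hηtop ENNReal.one_ne_top).mpr hη1
      simpa using this
    have ha0 : 0 < aR := ENNReal.toReal_pos hα0.ne' hαtop
    have ha1 : aR < 1 := by
      have := (ENNReal.toReal_lt_toReal hαtop ENNReal.one_ne_top).mpr hα1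
      simpa using this
    have tail : ∀ κ : ℝ, 0 < κ →
        (∀ P : Measure Y → ℝ≥0∞, IsFinPrior 𝒲 P → mm P e ≤ (mm P aR) ^ κ) →
        renyiCapacity α 𝒲 < ⊤ := by
      intro κ hκ hbound
      set r : ℝ := (aR / (1 - aR)) * κ⁻¹ * ((1 - e) / e) with hr
      have hrpos : 0 < r :=
        mul_pos (mul_pos (div_pos ha0 (by linarith)) (inv_pos.mpr hκ))
          (div_pos (by linarith) he0)
      have hcap : renyiCapacity α 𝒲 ≤ (r : EReal) * renyiCapacity η 𝒲 := by
        rw [renyiCapacity_eq α 𝒲, renyiCapacity_eq η 𝒲, ecoe_mul_iSup _ hrpos]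
        apply iSup_le
        rintro ⟨P, hP⟩
        refine le_trans ?_ (le_iSup (fun Q : {P : Measure Y → ℝ≥0∞ // IsFinPrior 𝒲 P} =>
          (r : EReal) * renyiInfo η Q.1) ⟨P, hP⟩)
        obtain ⟨hfin, hsub, hsum⟩ := hP
        have hia : renyiInfo α P
            = ((aR / (1 - aR) : ℝ) : EReal) * (- ENNReal.log (mm P aR)) := by
          rw [renyiInfo_eq P hαtop hα1.ne, ← haR,
            show aR - 1 = -(1 - aR) by ring, div_neg, EReal.coe_neg, neg_mul, ← mul_neg]
        have hie : renyiInfo η P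
            = ((e / (1 - e) : ℝ) : EReal) * (- ENNReal.log (mm P e)) := by
          rw [renyiInfo_eq P hηtop hη1.ne, ← he,
            show e - 1 = -(1 - e) by ring, div_neg, EReal.coe_neg, neg_mul, ← mul_neg]
        have hlog : ENNReal.log (mm P e) ≤ (κ : EReal) * ENNReal.log (mm P aR) := by
          refine le_trans (ENNReal.log_monotone (hbound P ⟨hfin, hsub, hsum⟩)) (le_of_eq ?_)
          rw [ENNReal.log_rpow]
        have hneg : (κ : EReal) * (- ENNReal.log (mm P aR)) ≤ - ENNReal.log (mm P e) := by
          rw [mul_neg]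
          exact EReal.neg_le_neg_iff.mpr hlog
        have hstep : - ENNReal.log (mm P aR)
            ≤ ((κ⁻¹ : ℝ) : EReal) * (- ENNReal.log (mm P e)) := by
          have h := mul_le_mul_of_nonneg_left hneg
            (EReal.coe_nonneg.mpr (inv_nonneg.mpr hκ.le))
          rwa [ecoe_mul_assoc, inv_mul_cancel₀ hκ.ne', EReal.coe_one, one_mul] at h
        rw [hia, hie]
        have hne1 : (1:ℝ) - aR ≠ 0 := by linarith
        have hne2 : (1:ℝ) - e ≠ 0 := by linarith
        have hne3 : e ≠ 0 := he0.ne'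
        have hne4 : κ ≠ 0 := hκ.ne'
        have hconst : (aR / (1 - aR)) * κ⁻¹ = r * (e / (1 - e)) := by
          rw [hr]
          field_simp
          try ring
        calc ((aR / (1 - aR) : ℝ) : EReal) * (- ENNReal.log (mm P aR))
            ≤ ((aR / (1 - aR) : ℝ) : EReal)
                * (((κ⁻¹ : ℝ) : EReal) * (- ENNReal.log (mm P e))) :=
              mul_le_mul_of_nonneg_left hstep
                (EReal.coe_nonneg.mpr (div_nonneg ha0.le (by linarith)))
          _ = (r : EReal) * (((e / (1 - e) : ℝ) : EReal) * (- ENNReal.log (mm P e))) := by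
              rw [ecoe_mul_assoc, ecoe_mul_assoc, hconst, ← ecoe_mul_assoc, ← ecoe_mul_assoc]
      exact lt_of_le_of_lt hcap (ecoe_mul_lt_top hrpos hCη)
    rcases lt_trichotomy aR e with hae | hae | hae
    · -- aR < e : use convexity between aR and 1.
      have hu0 : 0 < (1 - e) / (1 - aR) := div_pos (by linarith) (by linarith)
      have hu1 : (1 - e) / (1 - aR) < 1 := by
        rw [div_lt_one (by linarith)]
        linarith
      refine tail ((1 - e) / (1 - aR) * aR / e) (by positivity) ?_
      rintro P ⟨hfin, hsub, hsum⟩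
      have hprob : ∀ W ∈ Function.support P, IsProbabilityMeasure W :=
        fun W hW => h𝒲 W (hsub hW)
      have hkey := mm_holder P hfin hsum ha0 one_pos hu0 hu1
      have hne1 : (1:ℝ) - aR ≠ 0 := by linarith
      have hc0 : (1 - e) / (1 - aR) * aR + (1 - (1 - e) / (1 - aR)) * 1 = e := by
        field_simp
        ring
      rw [hc0, mm_one P hfin hsum hprob, ENNReal.one_rpow, mul_one] at hkey
      exact hkey
    · -- aR = e : then α = η.
      have : α = η := by
        rw [← ENNReal.ofReal_toReal hαtop, ← ENNReal.ofReal_toReal hηtop, ← haR, ← he, hae]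
      rw [this]
      exact hCη
    · -- e < aR : use convexity between e/2 and aR.
      have hu0 : 0 < (aR - e) / (aR - e / 2) := div_pos (by linarith) (by linarith)
      have hu1 : (aR - e) / (aR - e / 2) < 1 := by
        rw [div_lt_one (by linarith)]
        linarith
      refine tail ((1 - (aR - e) / (aR - e / 2)) * aR / e) ?_ ?_
      · have h1u : 0 < 1 - (aR - e) / (aR - e / 2) := by linarith
        positivity
      rintro P ⟨hfin, hsub, hsum⟩
      have hprob : ∀ W ∈ Function.support P, IsProbabilityMeasure W :=
        fun W hW => h𝒲 W (hsub hW)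
      have hkey := mm_holder P hfin hsum (by linarith : (0:ℝ) < e / 2) ha0 hu0 hu1
      have hne1 : aR - e / 2 ≠ 0 := by linarith
      have hne2 : aR * 2 - e ≠ 0 := by linarith
      have hne3 : aR * 4 - e * 2 ≠ 0 := by linarith
      have hc0 : (aR - e) / (aR - e / 2) * (e / 2)
          + (1 - (aR - e) / (aR - e / 2)) * aR = e := by
        field_simp
        ring
      rw [hc0] at hkey
      refine le_trans hkey ?_
      have h1 : (mm P (e / 2)) ^ ((aR - e) / (aR - e / 2) * (e / 2) / e) ≤ 1 :=
        ENNReal.rpow_le_one (mm_le_one P hfin hsum hprob (by linarith) (by linarith))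
          (by positivity)
      calc (mm P (e / 2)) ^ ((aR - e) / (aR - e / 2) * (e / 2) / e)
            * (mm P aR) ^ ((1 - (aR - e) / (aR - e / 2)) * aR / e)
          ≤ 1 * (mm P aR) ^ ((1 - (aR - e) / (aR - e / 2)) * aR / e) :=
            mul_le_mul_left h1 _
        _ = (mm P aR) ^ ((1 - (aR - e) / (aR - e / 2)) * aR / e) := one_mul _

end RenyiPaper
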